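/- The norm function V(x) = ‖x‖ (Euclidean norm on ℝ⁵) is an EGDCLF of order N for the discrete-time unicycle model, with α ∈ (0,1) arbitrary and state-dependent weights σ_i(x) = (1−α)/((N−1)·c) · min{‖x‖^{1/2}, 1} for i < N (with value (1−α)/((N−1)c) when ‖x‖ ≥ 1 or x = 0) and σ_N(x) = 1 − Σ_{i<N} σ_i(x), provided N ≥ 8, where c := 2·(1+h²)^{1/2}·(9/4 + 4/(h²·max{1,(N−8)/7}²))^{1/2}. In particular: properties (P1)–(P4) hold with χ₁(r) = r, χ₂(r) = r, φ(r) = (N−1)·c·max{r^{1/2}, r}, λ̃ = e^{α/2}, μ̃ = 1/2. -/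

import Mathlib

/-- The discrete-time dynamic unicycle model: `x` is a solution with input `u`. -/
def UnicycleSol (m J k κ h : ℝ) (u : ℕ → ℝ × ℝ)
    (x : ℕ → EuclideanSpace ℝ (Fin 5)) : Prop :=
  ∀ t : ℕ,
    x (t + 1) 0 = x t 0 + h * x t 3 * Real.cos (x t 2) ∧
    x (t + 1) 1 = x t 1 + h * x t 3 * Real.sin (x t 2) ∧
    x (t + 1) 2 = x t 2 + h * x t 4 ∧
    x (t + 1) 3 = x t 3 + (h / m) * ((u t).1 - k * x t 3) ∧
    x (t + 1) 4 = x t 4 + (h / J) * ((u t).2 - κ * x t 4)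


noncomputable def mk5 (v0 v1 v2 v3 v4 : ℝ) : EuclideanSpace ℝ (Fin 5) :=
  (WithLp.equiv 2 (Fin 5 → ℝ)).symm ![v0, v1, v2, v3, v4]

@[simp] lemma mk5_a0 (v0 v1 v2 v3 v4 : ℝ) : mk5 v0 v1 v2 v3 v4 0 = v0 := rfl
@[simp] lemma mk5_a1 (v0 v1 v2 v3 v4 : ℝ) : mk5 v0 v1 v2 v3 v4 1 = v1 := rfl
@[simp] lemma mk5_a2 (v0 v1 v2 v3 v4 : ℝ) : mk5 v0 v1 v2 v3 v4 2 = v2 := rfl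
@[simp] lemma mk5_a3 (v0 v1 v2 v3 v4 : ℝ) : mk5 v0 v1 v2 v3 v4 3 = v3 := rfl
@[simp] lemma mk5_a4 (v0 v1 v2 v3 v4 : ℝ) : mk5 v0 v1 v2 v3 v4 4 = v4 := rfl

lemma norm_le_sum5 (x : EuclideanSpace ℝ (Fin 5)) :
    ‖x‖ ≤ |x 0| + |x 1| + |x 2| + |x 3| + |x 4| := by
  have h0 : (0:ℝ) ≤ |x 0| + |x 1| + |x 2| + |x 3| + |x 4| := by positivity
  rw [EuclideanSpace.norm_eq, Fin.sum_univ_five]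
  calc Real.sqrt (‖x 0‖^2 + ‖x 1‖^2 + ‖x 2‖^2 + ‖x 3‖^2 + ‖x 4‖^2)
      ≤ Real.sqrt ((|x 0| + |x 1| + |x 2| + |x 3| + |x 4|)^2) := by
        apply Real.sqrt_le_sqrt
        simp only [Real.norm_eq_abs]
        nlinarith [mul_nonneg (abs_nonneg (x 0)) (abs_nonneg (x 1)),
          mul_nonneg (abs_nonneg (x 0)) (abs_nonneg (x 2)),
          mul_nonneg (abs_nonneg (x 0)) (abs_nonneg (x 3)),
          mul_nonneg (abs_nonneg (x 0)) (abs_nonneg (x 4)),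
          mul_nonneg (abs_nonneg (x 1)) (abs_nonneg (x 2)),
          mul_nonneg (abs_nonneg (x 1)) (abs_nonneg (x 3)),
          mul_nonneg (abs_nonneg (x 1)) (abs_nonneg (x 4)),
          mul_nonneg (abs_nonneg (x 2)) (abs_nonneg (x 3)),
          mul_nonneg (abs_nonneg (x 2)) (abs_nonneg (x 4)),
          mul_nonneg (abs_nonneg (x 3)) (abs_nonneg (x 4)), sq_abs (x 0), sq_abs (x 1),
          sq_abs (x 2), sq_abs (x 3), sq_abs (x 4)]
    _ = _ := Real.sqrt_sq h0

lemma abs_coord_le (x : EuclideanSpace ℝ (Fin 5)) (i : Fin 5) : |x i| ≤ ‖x‖ := by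
  rw [EuclideanSpace.norm_eq, ← Real.sqrt_sq_eq_abs]
  apply Real.sqrt_le_sqrt
  have : ‖x i‖ ^ 2 ≤ ∑ j, ‖x j‖ ^ 2 :=
    Finset.single_le_sum (fun j _ => sq_nonneg ‖x j‖) (Finset.mem_univ i)
  simpa [Real.norm_eq_abs, sq_abs] using this

set_option maxHeartbeats 2000000 in
lemma reach_aux (m J k κ h : ℝ) (hm : 0 < m) (hJ : 0 < J) (hh : 0 < h)
    (x₀ : EuclideanSpace ℝ (Fin 5)) (hx0 : x₀ ≠ 0) (B : ℝ)
    (hB : 20 + 12*h + 16/h ≤ B) :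
    ∃ (u : ℕ → ℝ × ℝ) (xs : ℕ → EuclideanSpace ℝ (Fin 5)),
      xs 0 = x₀ ∧ UnicycleSol m J k κ h u xs ∧
      (∀ t, 4 ≤ t → xs t = 0) ∧
      min (Real.sqrt ‖x₀‖) 1 * (‖xs 1‖ + ‖xs 2‖ + ‖xs 3‖) ≤ B * ‖x₀‖ := by
  have hr : 0 < ‖x₀‖ := norm_pos_iff.mpr hx0
  set r := ‖x₀‖ with hrdef
  set ψ := min (Real.sqrt r) 1 with hψdef
  have hψ0 : 0 < ψ := lt_min (Real.sqrt_pos.mpr hr) one_pos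
  have hψ1 : ψ ≤ 1 := min_le_right _ _
  have hψsq : ψ * ψ ≤ r := by
    rcases le_total (Real.sqrt r) 1 with hle | hge
    · rw [hψdef, min_eq_left hle]; exact (Real.mul_self_sqrt hr.le).le
    · rw [hψdef, min_eq_right hge]
      nlinarith [Real.mul_self_sqrt hr.le, hge, Real.sqrt_nonneg r]
  set ca := Real.cos ψ with hcadef
  set sa := Real.sin ψ with hsadef
  have hca_lb : (1:ℝ)/2 ≤ ca := by
    rw [hcadef]
    nlinarith [Real.one_sub_sq_div_two_le_cos (x := ψ), hψ1, hψ0]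
  have hca1 : ca ≤ 1 := Real.cos_le_one ψ
  have hca0 : 0 < ca := by linarith
  have hsa_lb : 3/4 * ψ ≤ sa := by
    have := Real.sin_gt_sub_cube hψ0
    nlinarith [hψ0, hψ1]
  have hsa0 : 0 < sa := by nlinarith
  have hsa_ub : sa ≤ ψ := Real.sin_le hψ0.le
  set a := x₀ 0 + h * x₀ 3 * Real.cos (x₀ 2) with hadef
  set b := x₀ 1 + h * x₀ 3 * Real.sin (x₀ 2) with hbdef
  set θ1 := x₀ 2 + h * x₀ 4 with hθdef
  set d1 := (-(a/ca) - b/sa)/2 with hd1def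
  set d2 := (-(a/ca) + b/sa)/2 with hd2def
  have hx00 : |x₀ 0| ≤ r := abs_coord_le x₀ 0
  have hx01 : |x₀ 1| ≤ r := abs_coord_le x₀ 1
  have hx02 : |x₀ 2| ≤ r := abs_coord_le x₀ 2
  have hx03 : |x₀ 3| ≤ r := abs_coord_le x₀ 3
  have hx04 : |x₀ 4| ≤ r := abs_coord_le x₀ 4
  have ha_abs : |a| ≤ (1+h)*r := by
    calc |a| ≤ |x₀ 0| + |h * x₀ 3 * Real.cos (x₀ 2)| := abs_add_le _ _
      _ = |x₀ 0| + h * |x₀ 3| * |Real.cos (x₀ 2)| := by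
          rw [abs_mul, abs_mul, abs_of_pos hh]
      _ ≤ r + h * r * 1 := by
          have hc1 := Real.abs_cos_le_one (x₀ 2)
          nlinarith [abs_nonneg (x₀ 3), abs_nonneg (Real.cos (x₀ 2)), hh.le,
            mul_nonneg hh.le (abs_nonneg (x₀ 3))]
      _ = (1+h)*r := by ring
  have hb_abs : |b| ≤ (1+h)*r := by
    calc |b| ≤ |x₀ 1| + |h * x₀ 3 * Real.sin (x₀ 2)| := abs_add_le _ _
      _ = |x₀ 1| + h * |x₀ 3| * |Real.sin (x₀ 2)| := by
          rw [abs_mul, abs_mul, abs_of_pos hh]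
      _ ≤ r + h * r * 1 := by
          have hc1 := Real.abs_sin_le_one (x₀ 2)
          nlinarith [abs_nonneg (x₀ 3), abs_nonneg (Real.sin (x₀ 2)), hh.le,
            mul_nonneg hh.le (abs_nonneg (x₀ 3))]
      _ = (1+h)*r := by ring
  have hθ1_abs : |θ1| ≤ (1+h)*r := by
    calc |θ1| ≤ |x₀ 2| + |h * x₀ 4| := abs_add_le _ _
      _ = |x₀ 2| + h * |x₀ 4| := by rw [abs_mul, abs_of_pos hh]
      _ ≤ r + h * r := by nlinarith [hh.le]
      _ = (1+h)*r := by ring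
  -- bounds on d1 d2
  have pψa : ψ * |a| ≤ (1+h)*r := by nlinarith [ha_abs, abs_nonneg a, hψ1, hψ0.le]
  have pψb : ψ * |b| ≤ (1+h)*r := by nlinarith [hb_abs, abs_nonneg b, hψ1, hψ0.le]
  have pψθ : ψ * |θ1| ≤ (1+h)*r := by nlinarith [hθ1_abs, abs_nonneg θ1, hψ1, hψ0.le]
  have hda : |a/ca| ≤ 2* |a| := by
    rw [abs_div, abs_of_pos hca0, div_le_iff₀ hca0]
    nlinarith [abs_nonneg a]
  have hdbψ : ψ * |b/sa| ≤ 4/3 * |b| := by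
    rw [abs_div, abs_of_pos hsa0, mul_div_assoc', div_le_iff₀ hsa0]
    nlinarith [hsa_lb, abs_nonneg b]
  have habs2 : ∀ y z : ℝ, |(-(y) - z)/2| ≤ (|y| + |z|)/2 := by
    intro y z
    rw [abs_div, show |(2:ℝ)| = 2 by norm_num]
    have h2 : -(y) - z = (-y) + (-z) := by ring
    rw [h2]
    have := abs_add_le (-y) (-z)
    simp only [abs_neg] at this
    linarith
  have habs2' : ∀ y z : ℝ, |(-(y) + z)/2| ≤ (|y| + |z|)/2 := by
    intro y z
    rw [abs_div, show |(2:ℝ)| = 2 by norm_num]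
    have := abs_add_le (-y) z
    simp only [abs_neg] at this
    linarith
  have hd1_abs : ψ * |d1| ≤ 2*((1+h)*r) := by
    have t1 : |d1| ≤ (|a/ca| + |b/sa|)/2 := habs2 _ _
    nlinarith [mul_le_mul_of_nonneg_left t1 hψ0.le,
      mul_le_mul_of_nonneg_left hda hψ0.le, hdbψ, pψa, hb_abs, hψ0.le, hr.le, hh.le]
  have hd2_abs : ψ * |d2| ≤ 2*((1+h)*r) := by
    have t1 : |d2| ≤ (|a/ca| + |b/sa|)/2 := habs2' _ _
    nlinarith [mul_le_mul_of_nonneg_left t1 hψ0.le,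
      mul_le_mul_of_nonneg_left hda hψ0.le, hdbψ, pψa, hb_abs, hψ0.le, hr.le, hh.le]
  -- the trajectory
  set xs : ℕ → EuclideanSpace ℝ (Fin 5) := fun t =>
    if t = 0 then x₀
    else if t = 1 then mk5 a b θ1 0 ((ψ - θ1)/h)
    else if t = 2 then mk5 a b ψ (d1/h) (-(2*ψ)/h)
    else if t = 3 then mk5 (a + d1*ca) (b + d1*sa) (-ψ) (d2/h) (ψ/h)
    else 0 with hxs
  have e0 : xs 0 = x₀ := rfl
  have e1 : xs 1 = mk5 a b θ1 0 ((ψ - θ1)/h) := rfl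
  have e2 : xs 2 = mk5 a b ψ (d1/h) (-(2*ψ)/h) := rfl
  have e3 : xs 3 = mk5 (a + d1*ca) (b + d1*sa) (-ψ) (d2/h) (ψ/h) := rfl
  have e4 : ∀ t, 4 ≤ t → xs t = 0 := by
    intro t ht
    rw [hxs]
    simp only
    rw [if_neg (by omega), if_neg (by omega), if_neg (by omega), if_neg (by omega)]
  set u : ℕ → ℝ × ℝ := fun t =>
    (m * ((xs (t+1) 3 - xs t 3)/h) + k * xs t 3,
     J * ((xs (t+1) 4 - xs t 4)/h) + κ * xs t 4) with hu
  refine ⟨u, xs, e0, ?_, e4, ?_⟩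
  · intro t
    have hv : xs (t+1) 3 = xs t 3 + (h/m) * ((u t).1 - k * xs t 3) := by
      rw [hu]; simp only; field_simp; ring
    have hw : xs (t+1) 4 = xs t 4 + (h/J) * ((u t).2 - κ * xs t 4) := by
      rw [hu]; simp only; field_simp; ring
    match t with
    | 0 => exact ⟨hadef, hbdef, hθdef, hv, hw⟩
    | 1 =>
      refine ⟨?_, ?_, ?_, hv, hw⟩
      · show a = a + h * 0 * Real.cos θ1; ring
      · show b = b + h * 0 * Real.sin θ1; ring
      · show ψ = θ1 + h * ((ψ - θ1)/h); field_simp; ring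
    | 2 =>
      refine ⟨?_, ?_, ?_, hv, hw⟩
      · show a + d1 * ca = a + h * (d1/h) * Real.cos ψ
        rw [← hcadef]; field_simp
      · show b + d1 * sa = b + h * (d1/h) * Real.sin ψ
        rw [← hsadef]; field_simp
      · show -ψ = ψ + h * (-(2*ψ)/h); field_simp; ring
    | 3 =>
      refine ⟨?_, ?_, ?_, hv, hw⟩
      · show (0:EuclideanSpace ℝ (Fin 5)) 0 = (a + d1*ca) + h * (d2/h) * Real.cos (-ψ)
        rw [PiLp.zero_apply, Real.cos_neg, ← hcadef, hd1def, hd2def]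
        field_simp
        ring
      · show (0:EuclideanSpace ℝ (Fin 5)) 1 = (b + d1*sa) + h * (d2/h) * Real.sin (-ψ)
        rw [PiLp.zero_apply, Real.sin_neg, ← hsadef, hd1def, hd2def]
        field_simp
        ring
      · show (0:EuclideanSpace ℝ (Fin 5)) 2 = -ψ + h * (ψ/h)
        rw [PiLp.zero_apply]; field_simp; ring
    | (n+4) =>
      refine ⟨?_, ?_, ?_, hv, hw⟩ <;>
      · rw [e4 (n+4) (by omega), e4 (n+4+1) (by omega)]
        simp
  · -- norm bound
    rw [e1, e2, e3]
    have w1 : h * |(ψ - θ1)/h| ≤ ψ + |θ1| := by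
      rw [abs_div, abs_of_pos hh, mul_comm, div_mul_cancel₀ _ hh.ne']
      calc |ψ - θ1| ≤ |ψ| + |θ1| := abs_sub _ _
        _ = ψ + |θ1| := by rw [abs_of_pos hψ0]
    have w2 : h * |d1/h| = |d1| := by
      rw [abs_div, abs_of_pos hh, mul_comm, div_mul_cancel₀ _ hh.ne']
    have w3 : h * |(-(2*ψ))/h| = 2*ψ := by
      rw [abs_div, abs_of_pos hh, mul_comm, div_mul_cancel₀ _ hh.ne', abs_neg,
        abs_of_pos (by linarith : (0:ℝ) < 2*ψ)]
    have w4 : h * |d2/h| = |d2| := by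
      rw [abs_div, abs_of_pos hh, mul_comm, div_mul_cancel₀ _ hh.ne']
    have w5 : h * |ψ/h| = ψ := by
      rw [abs_div, abs_of_pos hh, mul_comm, div_mul_cancel₀ _ hh.ne', abs_of_pos hψ0]
    have n1 : h * ‖mk5 a b θ1 0 ((ψ - θ1)/h)‖ ≤ h * (|a| + |b| + |θ1|) + (ψ + |θ1|) := by
      have hn := norm_le_sum5 (mk5 a b θ1 0 ((ψ - θ1)/h))
      simp only [mk5_a0, mk5_a1, mk5_a2, mk5_a3, mk5_a4, abs_zero] at hn
      linarith [mul_le_mul_of_nonneg_left hn hh.le, w1]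
    have n2 : h * ‖mk5 a b ψ (d1/h) (-(2*ψ)/h)‖ ≤ h * (|a| + |b| + ψ) + (|d1| + 2*ψ) := by
      have hn := norm_le_sum5 (mk5 a b ψ (d1/h) (-(2*ψ)/h))
      simp only [mk5_a0, mk5_a1, mk5_a2, mk5_a3, mk5_a4] at hn
      rw [abs_of_pos hψ0] at hn
      linarith [mul_le_mul_of_nonneg_left hn hh.le, w2, w3]
    have n3 : h * ‖mk5 (a + d1*ca) (b + d1*sa) (-ψ) (d2/h) (ψ/h)‖ ≤
        h * (|a| + |b| + 2 * |d1| + ψ) + (|d2| + ψ) := by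
      have hn := norm_le_sum5 (mk5 (a + d1*ca) (b + d1*sa) (-ψ) (d2/h) (ψ/h))
      simp only [mk5_a0, mk5_a1, mk5_a2, mk5_a3, mk5_a4, abs_neg] at hn
      rw [abs_of_pos hψ0] at hn
      have c1 : |a + d1*ca| ≤ |a| + |d1| := by
        calc |a + d1*ca| ≤ |a| + |d1*ca| := abs_add_le _ _
          _ = |a| + |d1| * |ca| := by rw [abs_mul]
          _ ≤ |a| + |d1| * 1 := by
              have hca' : |ca| ≤ 1 := by rw [abs_of_pos hca0]; exact hca1
              have := mul_le_mul_of_nonneg_left hca' (abs_nonneg d1)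
              linarith
          _ = |a| + |d1| := by ring
      have c2 : |b + d1*sa| ≤ |b| + |d1| := by
        calc |b + d1*sa| ≤ |b| + |d1*sa| := abs_add_le _ _
          _ = |b| + |d1| * |sa| := by rw [abs_mul]
          _ ≤ |b| + |d1| * 1 := by
              have hsa' : |sa| ≤ 1 := by rw [abs_of_pos hsa0]; linarith
              have := mul_le_mul_of_nonneg_left hsa' (abs_nonneg d1)
              linarith
          _ = |b| + |d1| := by ring
      linarith [mul_le_mul_of_nonneg_left hn hh.le, w4, w5,
        mul_le_mul_of_nonneg_left c1 hh.le, mul_le_mul_of_nonneg_left c2 hh.le]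
    have m1 := mul_le_mul_of_nonneg_left n1 hψ0.le
    have m2 := mul_le_mul_of_nonneg_left n2 hψ0.le
    have m3 := mul_le_mul_of_nonneg_left n3 hψ0.le
    have qa := mul_le_mul_of_nonneg_left pψa hh.le
    have qb := mul_le_mul_of_nonneg_left pψb hh.le
    have qθ := mul_le_mul_of_nonneg_left pψθ hh.le
    have qd1 := mul_le_mul_of_nonneg_left hd1_abs hh.le
    have qψψ := mul_le_mul_of_nonneg_left hψsq hh.le
    have hBh : (20 + 12*h + 16/h) * (r*h) ≤ B * (r*h) :=
      mul_le_mul_of_nonneg_right hB (by positivity)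
    have hBh' : (20 + 12*h + 16/h) * (r*h) = (20*h + 12*h^2 + 16) * r := by
      field_simp
    have goalh : ψ * (‖mk5 a b θ1 0 ((ψ - θ1)/h)‖ + ‖mk5 a b ψ (d1/h) (-(2*ψ)/h)‖ +
        ‖mk5 (a + d1*ca) (b + d1*sa) (-ψ) (d2/h) (ψ/h)‖) * h ≤ B * r * h := by
      linarith [m1, m2, m3, qa, qb, qθ, qd1, qψψ, hd1_abs, hd2_abs, hψsq, pψθ,
        hBh, hBh', hr.le, mul_nonneg hh.le hr.le,
        mul_nonneg (mul_nonneg hh.le hh.le) hr.le]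
    exact le_of_mul_le_mul_right goalh hh

lemma budget_aux (h M n : ℝ) (hh : 0 < h) (hM : 1 ≤ M) (hn : 7 * M ≤ n) :
    20 + 12*h + 16/h ≤ n * (2 * Real.sqrt (1 + h^2) * Real.sqrt (9/4 + 4/(h^2 * M^2))) := by
  have hM0 : 0 < M := by linarith
  have hn0 : 0 < n := by linarith
  set s1 := Real.sqrt (1 + h^2) with hs1def
  set s2 := Real.sqrt (9/4 + 4/(h^2 * M^2)) with hs2def
  have hs1 : 0 ≤ s1 := Real.sqrt_nonneg _
  have hs2 : 0 ≤ s2 := Real.sqrt_nonneg _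
  -- step A : 20 + 12h + 16/h ≤ 14 * sqrt ((1+h^2)*(9/4+4/h^2))
  have poly : (12*h^2 + 20*h + 16)^2 ≤ ((1+h^2) * (9/4*h^2+4)) * 14^2 := by
    nlinarith [sq_nonneg (h - 1), sq_nonneg (h^2 - 1), sq_nonneg (h^2 - h),
      sq_nonneg (h^2 - 2*h), sq_nonneg (h - 2), sq_nonneg (2*h - 3), sq_nonneg h,
      mul_pos hh hh, hh.le, sq_nonneg (h^2 - 2*h + 1)]
  have stepA : 20 + 12*h + 16/h ≤ 14 * Real.sqrt ((1+h^2) * (9/4 + 4/h^2)) := by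
    have hq : Real.sqrt ((1+h^2) * (9/4 + 4/h^2))
        = Real.sqrt ((1+h^2) * (9/4*h^2+4)) / h := by
      rw [show (1+h^2) * (9/4 + 4/h^2) = ((1+h^2) * (9/4*h^2+4))/h^2 by field_simp,
        Real.sqrt_div (by positivity) _, Real.sqrt_sq hh.le]
    rw [hq, ← mul_div_assoc, le_div_iff₀ hh]
    have h2 : (12*h^2 + 20*h + 16)/14 ≤ Real.sqrt ((1+h^2) * (9/4*h^2+4)) := by
      apply Real.le_sqrt_of_sq_le
      rw [div_pow, div_le_iff₀ (by norm_num : (0:ℝ) < 14^2)]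
      exact poly
    calc (20 + 12*h + 16/h) * h = 12*h^2 + 20*h + 16 := by field_simp; ring
      _ ≤ 14 * Real.sqrt ((1+h^2) * (9/4*h^2+4)) := by linarith
  -- step B : sqrt ((1+h^2)*(9/4+4/h^2)) = s1 * sqrt (9/4+4/h^2)
  have stepB : Real.sqrt ((1+h^2) * (9/4 + 4/h^2)) = s1 * Real.sqrt (9/4 + 4/h^2) :=
    Real.sqrt_mul (by positivity) _
  -- step C : sqrt (9/4+4/h^2) ≤ M * s2
  have stepC : Real.sqrt (9/4 + 4/h^2) ≤ M * s2 := by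
    have e1 : M * s2 = Real.sqrt (M^2 * (9/4 + 4/(h^2*M^2))) := by
      rw [Real.sqrt_mul (sq_nonneg M), Real.sqrt_sq hM0.le]
    have e2 : M^2 * (9/4 + 4/(h^2*M^2)) = 9*M^2/4 + 4/h^2 := by
      field_simp
    rw [e1, e2]
    apply Real.sqrt_le_sqrt
    nlinarith [hM, hM0]
  calc 20 + 12*h + 16/h ≤ 14 * (s1 * Real.sqrt (9/4 + 4/h^2)) := by rw [← stepB]; exact stepA
    _ ≤ 14 * (s1 * (M * s2)) := by
        apply mul_le_mul_of_nonneg_left _ (by norm_num)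
        exact mul_le_mul_of_nonneg_left stepC hs1
    _ = 7*M * (2 * s1 * s2) := by ring
    _ ≤ n * (2 * s1 * s2) := by
        apply mul_le_mul_of_nonneg_right hn (by positivity)

set_option maxHeartbeats 1000000 in
/-- the Euclidean norm is an EGDCLF of order `N` for the unicycle
model with the Condition-2 weights; properties (P1)–(P4) hold with
`χ₁ = χ₂ = id`, `φ(r) = (N−1)·c·max{r^(1/2), r}`, `λ̃ = e^(α/2)`, `μ̃ = 1/2`. -/
theorem norm_is_EGDCLF_for_unicycle
    (m J k κ h : ℝ) (hm : 0 < m) (hJ : 0 < J) (hk : 0 < k) (hκ : 0 < κ) (hh : 0 < h)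
    (N : ℕ) (hN : 8 ≤ N) (α : ℝ) (hα : α ∈ Set.Ioo (0 : ℝ) 1)
    (c : ℝ)
    (hc : c = 2 * Real.sqrt (1 + h ^ 2) *
      Real.sqrt (9/4 + 4 / (h ^ 2 * max 1 (((N : ℝ) - 8) / 7) ^ 2)))
    (σ : ℕ → EuclideanSpace ℝ (Fin 5) → ℝ)
    (hσi : ∀ i : ℕ, 1 ≤ i → i < N → ∀ x : EuclideanSpace ℝ (Fin 5),
      σ i x = (1 - α) / (((N : ℝ) - 1) * c) *
        (if 0 < ‖x‖ ∧ ‖x‖ < 1 then ‖x‖ ^ (1/2 : ℝ) else 1))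
    (hσN : ∀ x : EuclideanSpace ℝ (Fin 5),
      σ N x = 1 - ∑ i ∈ Finset.Ico 1 N, σ i x)
    (φ : ℝ → ℝ) (hφ : ∀ r : ℝ, φ r = ((N : ℝ) - 1) * c * max (r ^ (1/2 : ℝ)) r) :
    -- positivity of the weights
    (∀ x : EuclideanSpace ℝ (Fin 5), ∀ i ∈ Finset.Icc 1 N, 0 < σ i x) ∧
    -- (P1) with χ₁(r) = r and χ₂(r) = r
    (∀ x : EuclideanSpace ℝ (Fin 5), ‖x‖ ≤ ‖x‖ ∧ ‖x‖ ≤ ‖x‖) ∧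
    -- (P2): average descent achievable, with weights summing to (at least) 1
    (∀ x₀ : EuclideanSpace ℝ (Fin 5),
      ∃ (u : ℕ → ℝ × ℝ) (xs : ℕ → EuclideanSpace ℝ (Fin 5)),
        xs 0 = x₀ ∧ UnicycleSol m J k κ h u xs ∧
        (∑ t ∈ Finset.Icc 1 N, σ t x₀ * ‖xs t‖ ≤ (1 - α) * ‖x₀‖) ∧
        1 ≤ ∑ i ∈ Finset.Icc 1 N, σ i x₀) ∧
    -- (P3)
    (∀ x : EuclideanSpace ℝ (Fin 5), (1 - α) * ‖x‖ ≤
      φ ‖x‖ * (Finset.Icc 1 N).inf'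
        (Finset.nonempty_Icc.mpr (by omega)) (fun i => σ i x)) ∧
    -- (P4) with λ̃ = e^(α/2) and μ̃ = 1/2 (here χ₁⁻¹ = id)
    (∀ r ≥ (0 : ℝ), ∀ τ : ℝ, -α ≤ τ →
      φ (r * Real.exp (-τ)) ≤ φ r * Real.exp (α / 2) * Real.exp (-(1/2 : ℝ) * τ)) := by
  obtain ⟨hα0, hα1⟩ := hα
  have hNR : (8:ℝ) ≤ (N:ℝ) := by exact_mod_cast hN
  have hN7 : (7:ℝ) ≤ (N:ℝ) - 1 := by linarith
  set M := max 1 (((N:ℝ)-8)/7) with hM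
  have hM1 : (1:ℝ) ≤ M := le_max_left _ _
  have hM7 : 7 * M ≤ (N:ℝ) - 1 := by
    have h1 : M ≤ ((N:ℝ)-1)/7 := max_le (by linarith) (by linarith)
    linarith
  have hcpos : 0 < c := by rw [hc]; positivity
  have hc3 : 3 ≤ c := by
    rw [hc]
    have h1 : (1:ℝ) ≤ Real.sqrt (1+h^2) := by
      have := Real.sqrt_le_sqrt (show (1:ℝ) ≤ 1+h^2 by nlinarith)
      rwa [Real.sqrt_one] at this
    have h2 : (3:ℝ)/2 ≤ Real.sqrt (9/4 + 4/(h^2*M^2)) := by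
      rw [show (3:ℝ)/2 = Real.sqrt (9/4) by
        rw [show (9:ℝ)/4 = (3/2)^2 by norm_num, Real.sqrt_sq]; norm_num]
      apply Real.sqrt_le_sqrt
      have : (0:ℝ) ≤ 4/(h^2*M^2) := by positivity
      linarith
    nlinarith [Real.sqrt_nonneg (1+h^2), Real.sqrt_nonneg (9/4+4/(h^2*M^2))]
  have hNc : 0 < ((N:ℝ)-1) * c := mul_pos (by linarith) hcpos
  have hbudget : 20 + 12*h + 16/h ≤ ((N:ℝ)-1)*c := by
    rw [hc]; exact budget_aux h M ((N:ℝ)-1) hh hM1 hM7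
  have hq_pos : ∀ x : EuclideanSpace ℝ (Fin 5),
      0 < (if 0 < ‖x‖ ∧ ‖x‖ < 1 then ‖x‖ ^ (1/2:ℝ) else 1) := by
    intro x
    split
    · next hcond => exact Real.rpow_pos_of_pos hcond.1 _
    · exact one_pos
  have hq_le1 : ∀ x : EuclideanSpace ℝ (Fin 5),
      (if 0 < ‖x‖ ∧ ‖x‖ < 1 then ‖x‖ ^ (1/2:ℝ) else 1) ≤ 1 := by
    intro x
    split
    · next hcond => exact Real.rpow_le_one (norm_nonneg x) hcond.2.le (by norm_num)
    · exact le_refl 1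
  have hIco : ∀ x : EuclideanSpace ℝ (Fin 5), ∑ i ∈ Finset.Ico 1 N, σ i x
      = (1-α) * (if 0 < ‖x‖ ∧ ‖x‖ < 1 then ‖x‖ ^ (1/2:ℝ) else 1) / c := by
    intro x
    have step : ∑ i ∈ Finset.Ico 1 N, σ i x = ∑ _i ∈ Finset.Ico 1 N,
        ((1-α)/(((N:ℝ)-1)*c) * (if 0 < ‖x‖ ∧ ‖x‖ < 1 then ‖x‖ ^ (1/2:ℝ) else 1)) :=
      Finset.sum_congr rfl (fun i hi =>
        hσi i (Finset.mem_Ico.mp hi).1 (Finset.mem_Ico.mp hi).2 x)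
    have hcast : ((N - 1 : ℕ) : ℝ) = (N:ℝ) - 1 := by
      have h1 : 1 ≤ N := by omega
      push_cast [h1]
      ring
    rw [step, Finset.sum_const, Nat.card_Ico, nsmul_eq_mul, hcast]
    field_simp
  have hσN' : ∀ x : EuclideanSpace ℝ (Fin 5),
      σ N x = 1 - (1-α) * (if 0 < ‖x‖ ∧ ‖x‖ < 1 then ‖x‖ ^ (1/2:ℝ) else 1) / c := by
    intro x; rw [hσN, hIco]
  have hpos : ∀ x : EuclideanSpace ℝ (Fin 5), ∀ i ∈ Finset.Icc 1 N, 0 < σ i x := by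
    intro x i hi
    rw [Finset.mem_Icc] at hi
    rcases eq_or_lt_of_le hi.2 with hiN | hiN
    · rw [hiN, hσN' x]
      have hq1 := hq_le1 x
      have hq0 := hq_pos x
      have hlt : (1-α) * (if 0 < ‖x‖ ∧ ‖x‖ < 1 then ‖x‖ ^ (1/2:ℝ) else 1) / c < 1 := by
        rw [div_lt_one hcpos]
        nlinarith
      linarith
    · rw [hσi i hi.1 hiN x]
      exact mul_pos (div_pos (by linarith) hNc) (hq_pos x)
  have hsum1 : ∀ x : EuclideanSpace ℝ (Fin 5), ∑ i ∈ Finset.Icc 1 N, σ i x = 1 := by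
    intro x
    rw [← Finset.Ico_insert_right (by omega : 1 ≤ N), Finset.sum_insert (by simp), hσN]
    ring
  refine ⟨hpos, fun x => ⟨le_refl _, le_refl _⟩, ?_, ?_, ?_⟩
  · -- P2
    intro x₀
    by_cases hx0 : x₀ = 0
    · refine ⟨fun _ => (0, 0), fun _ => 0, hx0.symm, ?_, ?_, (hsum1 x₀).ge⟩
      · intro t
        refine ⟨?_, ?_, ?_, ?_, ?_⟩ <;> simp
      · rw [hx0]
        simp
    · obtain ⟨u, xs, hxs0, hsol, hzero, hbound⟩ :=
        reach_aux m J k κ h hm hJ hh x₀ hx0 (((N:ℝ)-1)*c) hbudget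
      refine ⟨u, xs, hxs0, hsol, ?_, (hsum1 x₀).ge⟩
      have hr : 0 < ‖x₀‖ := norm_pos_iff.mpr hx0
      have hsub : ∑ t ∈ Finset.Icc 1 N, σ t x₀ * ‖xs t‖
          = ∑ t ∈ Finset.Icc 1 3, σ t x₀ * ‖xs t‖ := by
        symm
        apply Finset.sum_subset (Finset.Icc_subset_Icc_right (by omega))
        intro t ht hnt
        have h4 : 4 ≤ t := by
          rw [Finset.mem_Icc] at ht hnt
          omega
        rw [hzero t h4, norm_zero, mul_zero]
      have h13 : Finset.Icc 1 3 = ({1, 2, 3} : Finset ℕ) := by decide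
      rw [hsub, h13, Finset.sum_insert (by decide), Finset.sum_insert (by decide),
        Finset.sum_singleton]
      have hq : (if 0 < ‖x₀‖ ∧ ‖x₀‖ < 1 then ‖x₀‖ ^ (1/2:ℝ) else 1)
          = min (Real.sqrt ‖x₀‖) 1 := by
        by_cases h1 : ‖x₀‖ < 1
        · rw [if_pos ⟨hr, h1⟩, ← Real.sqrt_eq_rpow, min_eq_left]
          have := Real.sqrt_le_sqrt h1.le
          rwa [Real.sqrt_one] at this
        · rw [if_neg (by push_neg; intro _; linarith), min_eq_right]
          push_neg at h1
          have := Real.sqrt_le_sqrt h1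
          rwa [Real.sqrt_one] at this
      rw [hσi 1 (by omega) (by omega) x₀, hσi 2 (by omega) (by omega) x₀,
        hσi 3 (by omega) (by omega) x₀, hq]
      have hs0 : 0 ≤ (1-α)/(((N:ℝ)-1)*c) := div_nonneg (by linarith) hNc.le
      have h2 := mul_le_mul_of_nonneg_left hbound hs0
      have h3 : (1-α)/(((N:ℝ)-1)*c) * (((N:ℝ)-1)*c*‖x₀‖) = (1-α)*‖x₀‖ := by
        field_simp
      linarith [h2]
  · -- P3
    intro x
    have hq0 := hq_pos x
    have hq1 := hq_le1 x
    set q := (if 0 < ‖x‖ ∧ ‖x‖ < 1 then ‖x‖ ^ (1/2:ℝ) else 1) with hqdef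
    have h1q : (1-α) * q ≤ 1 := by nlinarith
    have hinf : (1-α)/(((N:ℝ)-1)*c) * q
        ≤ (Finset.Icc 1 N).inf' (Finset.nonempty_Icc.mpr (by omega)) (fun i => σ i x) := by
      apply Finset.le_inf'
      intro i hi
      rw [Finset.mem_Icc] at hi
      rcases eq_or_lt_of_le hi.2 with hiN | hiN
      · have hNx : σ i x = 1 - (1-α) * q / c := by rw [hiN]; exact hσN' x
        rw [hNx]
        have e1 : (1-α)*q/c ≤ 1/3 :=
          div_le_div₀ (by norm_num) h1q (by norm_num) (by linarith)
        have h21 : (21:ℝ) ≤ ((N:ℝ)-1)*c := by nlinarith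
        have e2 : (1-α)/(((N:ℝ)-1)*c) * q ≤ 1/21 := by
          calc (1-α)/(((N:ℝ)-1)*c) * q = (1-α)*q/(((N:ℝ)-1)*c) := by ring
            _ ≤ 1/21 := div_le_div₀ (by norm_num) h1q (by norm_num) h21
        linarith
      · have : σ i x = (1-α)/(((N:ℝ)-1)*c) * q := hσi i hi.1 hiN x
        rw [this]
    have hφx := hφ ‖x‖
    have hmax0 : 0 ≤ max (‖x‖ ^ (1/2:ℝ)) ‖x‖ := le_trans (norm_nonneg x) (le_max_right _ _)
    have hφ0 : 0 ≤ φ ‖x‖ := by rw [hφx]; exact mul_nonneg hNc.le hmax0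
    have key : (1-α) * ‖x‖ ≤ (1-α) * q * max (‖x‖ ^ (1/2:ℝ)) ‖x‖ := by
      by_cases hcond : 0 < ‖x‖ ∧ ‖x‖ < 1
      · have hqe : q = ‖x‖ ^ (1/2:ℝ) := if_pos hcond
        have hml : ‖x‖ ^ (1/2:ℝ) * ‖x‖ ^ (1/2:ℝ) = ‖x‖ := by
          rw [← Real.rpow_add hcond.1]; norm_num
        have h3 : ‖x‖ ^ (1/2:ℝ) * (‖x‖ ^ (1/2:ℝ)) ≤ ‖x‖ ^ (1/2:ℝ) * max (‖x‖ ^ (1/2:ℝ)) ‖x‖ :=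
          mul_le_mul_of_nonneg_left (le_max_left _ _) (Real.rpow_nonneg (norm_nonneg x) _)
        have h4 := mul_le_mul_of_nonneg_left h3 (by linarith : (0:ℝ) ≤ 1-α)
        rw [hml] at h4
        rw [hqe]
        linarith
      · have hqe : q = 1 := if_neg hcond
        rw [hqe]
        push_neg at hcond
        rcases eq_or_lt_of_le (norm_nonneg x) with h0 | h0
        · rw [← h0]
          have hz : (0:ℝ)^(1/2:ℝ) = 0 := Real.zero_rpow (by norm_num)
          rw [hz]
          norm_num
        · have h1 : 1 ≤ ‖x‖ := hcond h0
          have h2 := le_max_right (‖x‖ ^ (1/2:ℝ)) ‖x‖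
          nlinarith
    calc (1-α) * ‖x‖ ≤ (1-α) * q * max (‖x‖ ^ (1/2:ℝ)) ‖x‖ := key
      _ = φ ‖x‖ * ((1-α)/(((N:ℝ)-1)*c) * q) := by rw [hφx]; field_simp
      _ ≤ φ ‖x‖ * (Finset.Icc 1 N).inf' (Finset.nonempty_Icc.mpr (by omega)) (fun i => σ i x) :=
          mul_le_mul_of_nonneg_left hinf hφ0
  · -- P4
    intro r hr τ hτ
    rw [hφ, hφ]
    have hE0 : 0 < Real.exp (-τ) := Real.exp_pos _
    have hexp0 : (0:ℝ) ≤ Real.exp (-(1/2:ℝ)*τ) := (Real.exp_pos _).le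
    have h1exp : 1 ≤ Real.exp (α/2) := Real.one_le_exp (by linarith)
    have hexple : Real.exp (-(1/2:ℝ)*τ) ≤ Real.exp (α/2) := by
      apply Real.exp_le_exp.mpr; linarith
    have hrp : 0 ≤ r ^ (1/2:ℝ) := Real.rpow_nonneg hr _
    have hmax0 : 0 ≤ max (r ^ (1/2:ℝ)) r := le_trans hr (le_max_right _ _)
    have e1 : Real.exp (-τ) ^ (1/2:ℝ) = Real.exp (-(1/2:ℝ)*τ) := by
      rw [← Real.exp_mul]; ring_nf
    have hhalf : Real.exp (-τ) = Real.exp (-(1/2:ℝ)*τ) * Real.exp (-(1/2:ℝ)*τ) := by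
      rw [← Real.exp_add]; ring_nf
    have hmaxb : max ((r * Real.exp (-τ)) ^ (1/2:ℝ)) (r * Real.exp (-τ))
        ≤ max (r ^ (1/2:ℝ)) r * (Real.exp (α/2) * Real.exp (-(1/2:ℝ)*τ)) := by
      apply max_le
      · rw [Real.mul_rpow hr hE0.le, e1]
        have t1 : r ^ (1/2:ℝ) * Real.exp (-(1/2:ℝ)*τ)
            ≤ max (r ^ (1/2:ℝ)) r * Real.exp (-(1/2:ℝ)*τ) :=
          mul_le_mul_of_nonneg_right (le_max_left _ _) hexp0
        nlinarith [mul_nonneg hmax0 hexp0, t1, h1exp]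
      · rw [hhalf]
        have s1 : r * Real.exp (-(1/2:ℝ)*τ) ≤ max (r ^ (1/2:ℝ)) r * Real.exp (α/2) :=
          mul_le_mul (le_max_right _ _) hexple hexp0 hmax0
        have s2 := mul_le_mul_of_nonneg_right s1 hexp0
        nlinarith [s2]
    have final := mul_le_mul_of_nonneg_left hmaxb hNc.le
    nlinarith [final]
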